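/- (Containment of a violator stretch in one SDMMSA block) Suppose Ȳ_j > Ȳ_{j+1} for some j ∈ [1,k−1]. Let j_l be the smallest integer such that Ȳ_i = Ȳ_j for all i ∈ [j_l, j], and let j_u be the largest integer such that Ȳ_i = Ȳ_{j+1} for all i ∈ [j+1, j_u]. Then the interval [j_l, j_u] is contained in a single block of the SDMMSA partition: there exists u ∈ [1,h] with [j_l, j_u] ⊆ [i_u, i_{u−1}−1]. -/
import Mathlib


open Finset

noncomputable section SDMMSA

/-- Pooled weight `n_{i,j} = ∑_{h=i}^j n_h`. -/
def pooledWeight (n : ℕ → ℝ) (i j : ℕ) : ℝ := ∑ h ∈ Finset.Icc i j, n h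

/-- Pooled (weighted) mean `Ȳ_{i,j} = (∑_{h=i}^j n_h Y_h) / n_{i,j}`. -/
def pooledMean (n Y : ℕ → ℝ) (i j : ℕ) : ℝ :=
  (∑ h ∈ Finset.Icc i j, n h * Y h) / pooledWeight n i j

/-- The first SDMMSA index for the data `(Y_1,n_1),…,(Y_t,n_t)`:
the smallest `j ∈ [1,t]` at which `Ȳ_{j,t} = max_{1 ≤ j' ≤ t} Ȳ_{j',t}`. -/
def firstIdx (n Y : ℕ → ℝ) (t : ℕ) : ℕ :=
  sInf {j | 1 ≤ j ∧ j ≤ t ∧ ∀ j', 1 ≤ j' → j' ≤ t → pooledMean n Y j' t ≤ pooledMean n Y j t}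

/-- Fuel-based recursion implementing the SDMMSA step-down procedure: on data range `[1,t]`,
every `i ≥ i₁ = firstIdx n Y t` gets the pooled mean `Ȳ_{i₁,t}` of the top block, and for
`i < i₁` we recurse on the data range `[1, i₁ - 1]`.  A fuel of `t` suffices since the
range shrinks strictly at each step. -/
def sdmmsaAux (n Y : ℕ → ℝ) : ℕ → ℕ → ℕ → ℝ
  | 0, _, _ => 0
  | fuel + 1, t, i =>
      if firstIdx n Y t ≤ i then pooledMean n Y (firstIdx n Y t) t
      else sdmmsaAux n Y fuel (firstIdx n Y t - 1) i

/-- `muhat n Y k i` is the SDMMSA estimate `μ̂_i` computed from the data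
`(Y_1,n_1),…,(Y_k,n_k)`. -/
def muhat (n Y : ℕ → ℝ) (k i : ℕ) : ℝ := sdmmsaAux n Y k k i

/-- The SDMMSA indices `i_u` computed from the data `(Y_1,n_1),…,(Y_k,n_k)`:
`sdIdx n Y k 0 = i_0 = k+1` and `i_{u+1}` is the first SDMMSA index of `[1, i_u - 1]`. -/
def sdIdx (n Y : ℕ → ℝ) (k : ℕ) : ℕ → ℕ
  | 0 => k + 1
  | u + 1 => firstIdx n Y (sdIdx n Y k u - 1)

/-- The number of steps `h` of the SDMMSA: the first `u` with `i_u = 1`. -/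
def sdSteps (n Y : ℕ → ℝ) (k : ℕ) : ℕ := sInf {u | sdIdx n Y k u = 1}

end SDMMSA


section Aux

lemma sum_Icc_split (f : ℕ → ℝ) {i m t : ℕ} (h1 : 1 ≤ i) (h2 : i ≤ m) (h3 : m ≤ t) :
    ∑ h ∈ Finset.Icc i t, f h
      = ∑ h ∈ Finset.Icc i (m - 1), f h + ∑ h ∈ Finset.Icc m t, f h := by
  obtain ⟨i', rfl⟩ : ∃ i', i = i' + 1 := ⟨i - 1, by omega⟩
  obtain ⟨m', rfl⟩ : ∃ m', m = m' + 1 := ⟨m - 1, by omega⟩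
  have : m' + 1 - 1 = m' := rfl
  rw [this, Finset.Icc_add_one_left_eq_Ioc, Finset.Icc_add_one_left_eq_Ioc, Finset.Icc_add_one_left_eq_Ioc]
  exact (Finset.sum_Ioc_consecutive f (by omega : i' ≤ m') (by omega : m' ≤ t)).symm

lemma div_lt_combo {S1 S2 W1 W2 : ℝ} (h1 : 0 < W1) (h2 : 0 < W2)
    (h : S2 / W2 < S1 / W1) : S2 / W2 < (S1 + S2) / (W1 + W2) := by
  rw [div_lt_div_iff₀ h2 h1] at h
  rw [div_lt_div_iff₀ h2 (by linarith)]
  nlinarith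

lemma combo_lt_div {S1 S2 W1 W2 : ℝ} (h1 : 0 < W1) (h2 : 0 < W2)
    (h : S2 / W2 < S1 / W1) : (S1 + S2) / (W1 + W2) < S1 / W1 := by
  rw [div_lt_div_iff₀ h2 h1] at h
  rw [div_lt_div_iff₀ (by linarith) h1]
  nlinarith

lemma combo_le_of_le {S1 S2 W1 W2 : ℝ} (h1 : 0 < W1) (h2 : 0 < W2)
    (h : S2 / W2 ≤ (S1 + S2) / (W1 + W2)) : (S1 + S2) / (W1 + W2) ≤ S1 / W1 := by
  rw [div_le_div_iff₀ h2 (by linarith)] at h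
  rw [div_le_div_iff₀ (by linarith) h1]
  nlinarith

variable {k : ℕ} {n Y : ℕ → ℝ}

lemma pw_pos (hn : ∀ h, 1 ≤ h → h ≤ k → 0 < n h) {i t : ℕ}
    (h1 : 1 ≤ i) (h2 : i ≤ t) (h3 : t ≤ k) : 0 < pooledWeight n i t := by
  refine Finset.sum_pos (fun h hh => ?_) ⟨i, by simp [Finset.mem_Icc]; omega⟩
  rw [Finset.mem_Icc] at hh
  exact hn h (by omega) (by omega)

lemma mean_const {i t : ℕ} {v : ℝ} (hpos : 0 < pooledWeight n i t)
    (hc : ∀ h, i ≤ h → h ≤ t → Y h = v) : pooledMean n Y i t = v := by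
  unfold pooledMean
  have : ∑ h ∈ Finset.Icc i t, n h * Y h = pooledWeight n i t * v := by
    unfold pooledWeight
    rw [Finset.sum_mul]
    refine Finset.sum_congr rfl (fun h hh => ?_)
    rw [Finset.mem_Icc] at hh
    rw [hc h hh.1 hh.2]
  rw [this, mul_comm, mul_div_assoc, div_self hpos.ne', mul_one]

/-- Split a pooled mean at `p` (blocks `[i,p]` and `[p+1,t]`). -/
lemma pooled_split (n Y : ℕ → ℝ) {i p t : ℕ} (h1 : 1 ≤ i) (h2 : i ≤ p) (h3 : p < t) :
    pooledMean n Y i t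
      = (∑ h ∈ Finset.Icc i p, n h * Y h + ∑ h ∈ Finset.Icc (p+1) t, n h * Y h)
        / (∑ h ∈ Finset.Icc i p, n h + ∑ h ∈ Finset.Icc (p+1) t, n h) := by
  have e1 := sum_Icc_split (fun h => n h * Y h) h1 (by omega : i ≤ p + 1) (by omega : p + 1 ≤ t)
  have e2 := sum_Icc_split n h1 (by omega : i ≤ p + 1) (by omega : p + 1 ≤ t)
  simp only [Nat.add_sub_cancel] at e1 e2
  unfold pooledMean pooledWeight
  rw [e1, e2]

end Aux

section Main

variable {k : ℕ} {n Y : ℕ → ℝ}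

lemma firstIdx_le (n Y : ℕ → ℝ) (t : ℕ) : firstIdx n Y t ≤ t := by
  unfold firstIdx
  rcases Set.eq_empty_or_nonempty
    {j | 1 ≤ j ∧ j ≤ t ∧ ∀ j', 1 ≤ j' → j' ≤ t →
      pooledMean n Y j' t ≤ pooledMean n Y j t} with h | h
  · rw [h, Nat.sInf_empty]; omega
  · exact (Nat.sInf_mem h).2.1

lemma firstIdx_spec (n Y : ℕ → ℝ) {t : ℕ} (ht : 1 ≤ t) :
    1 ≤ firstIdx n Y t ∧ firstIdx n Y t ≤ t ∧
      ∀ j', 1 ≤ j' → j' ≤ t →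
        pooledMean n Y j' t ≤ pooledMean n Y (firstIdx n Y t) t := by
  have hne : ({j | 1 ≤ j ∧ j ≤ t ∧ ∀ j', 1 ≤ j' → j' ≤ t →
      pooledMean n Y j' t ≤ pooledMean n Y j t} : Set ℕ).Nonempty := by
    obtain ⟨b, hb, hmax⟩ := Finset.exists_max_image (Finset.Icc 1 t)
      (fun j => pooledMean n Y j t) ⟨1, by simp [Finset.mem_Icc, ht]⟩
    rw [Finset.mem_Icc] at hb
    exact ⟨b, hb.1, hb.2, fun j' h1 h2 => hmax j' (Finset.mem_Icc.2 ⟨h1, h2⟩)⟩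
  exact Nat.sInf_mem hne

/-- The core analytic fact: no maximizer of `j' ↦ Ȳ_{j',t}` lies in `(j_l, j_u]`. -/
lemma not_max_in_stretch
    (hn : ∀ h, 1 ≤ h → h ≤ k → 0 < n h)
    {j jl ju : ℕ} (hj1 : 1 ≤ j) (hviol : Y (j + 1) < Y j)
    (hjl1 : 1 ≤ jl) (hjlj : jl ≤ j)
    (hjlconst : ∀ i, jl ≤ i → i ≤ j → Y i = Y j)
    (hju1 : j + 1 ≤ ju) (hjuk : ju ≤ k)
    (hjuconst : ∀ i, j + 1 ≤ i → i ≤ ju → Y i = Y (j + 1))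
    {t m : ℕ} (htju : ju ≤ t) (htk : t ≤ k) (hm1 : jl < m) (hm2 : m ≤ ju)
    (hmax : ∀ j', 1 ≤ j' → j' ≤ t → pooledMean n Y j' t ≤ pooledMean n Y m t) :
    False := by
  have hm1' : 1 ≤ m := by omega
  -- Step 1 : Ȳ_{m,t} ≤ Ȳ_{m,ju}
  have step1 : pooledMean n Y m t ≤ pooledMean n Y m ju := by
    rcases eq_or_lt_of_le htju with rfl | hlt
    · exact le_refl _
    · have hsplit := pooled_split n Y hm1' hm2 hlt
      have hB := hmax (ju + 1) (by omega) (by omega)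
      have hBdef : pooledMean n Y (ju + 1) t
          = (∑ h ∈ Finset.Icc (ju+1) t, n h * Y h) / (∑ h ∈ Finset.Icc (ju+1) t, n h) := rfl
      have hAdef : pooledMean n Y m ju
          = (∑ h ∈ Finset.Icc m ju, n h * Y h) / (∑ h ∈ Finset.Icc m ju, n h) := rfl
      have hW1 : 0 < ∑ h ∈ Finset.Icc m ju, n h := pw_pos hn hm1' hm2 hjuk
      have hW2 : 0 < ∑ h ∈ Finset.Icc (ju+1) t, n h := pw_pos hn (by omega) (by omega) htk
      rw [hsplit, hAdef]
      rw [hsplit, hBdef] at hB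
      exact combo_le_of_le hW1 hW2 hB
  -- Step 2 : Ȳ_{m,ju} < Ȳ_{jl,m-1}
  have step2 : pooledMean n Y m ju < pooledMean n Y jl (m - 1) := by
    by_cases hmj : m ≤ j
    · -- block means : Ȳ_{jl,m-1} = Y j ; Ȳ_{m,ju} < Y j
      have hWl : 0 < pooledWeight n jl (m - 1) := pw_pos hn hjl1 (by omega) (by omega)
      have e1 : pooledMean n Y jl (m - 1) = Y j :=
        mean_const hWl (fun h h1 h2 => hjlconst h h1 (by omega))
      have hsplit := pooled_split n Y hm1' hmj (by omega : j < ju)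
      have hW1 : 0 < ∑ h ∈ Finset.Icc m j, n h := pw_pos hn hm1' hmj (by omega)
      have hW2 : 0 < ∑ h ∈ Finset.Icc (j+1) ju, n h := pw_pos hn (by omega) hju1 hjuk
      have eA : pooledMean n Y m j = Y j :=
        mean_const hW1 (fun h h1 h2 => hjlconst h (by omega) h2)
      have eB : pooledMean n Y (j+1) ju = Y (j+1) :=
        mean_const hW2 (fun h h1 h2 => hjuconst h h1 h2)
      have hAdef : pooledMean n Y m j
          = (∑ h ∈ Finset.Icc m j, n h * Y h) / (∑ h ∈ Finset.Icc m j, n h) := rfl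
      have hBdef : pooledMean n Y (j+1) ju
          = (∑ h ∈ Finset.Icc (j+1) ju, n h * Y h) / (∑ h ∈ Finset.Icc (j+1) ju, n h) := rfl
      have hlt : pooledMean n Y (j+1) ju < pooledMean n Y m j := by rw [eA, eB]; exact hviol
      rw [hAdef, hBdef] at hlt
      have := combo_lt_div hW1 hW2 hlt
      rw [← hsplit, ← hAdef] at this
      rw [e1, ← eA]
      exact this
    · push_neg at hmj   -- j < m, i.e. j+1 ≤ m ≤ ju
      have hWu : 0 < pooledWeight n m ju := pw_pos hn hm1' hm2 hjuk
      have e2 : pooledMean n Y m ju = Y (j+1) :=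
        mean_const hWu (fun h h1 h2 => hjuconst h (by omega) h2)
      rw [e2]
      rcases eq_or_lt_of_le (show j + 1 ≤ m from hmj) with rfl | hjm
      · -- m = j+1, so m-1 = j
        have hWl : 0 < pooledWeight n jl j := pw_pos hn hjl1 hjlj (by omega)
        have : pooledMean n Y jl (j + 1 - 1) = Y j := by
          simpa using mean_const hWl (fun h h1 h2 => hjlconst h h1 h2)
        rw [this]; exact hviol
      · -- j+1 < m : split [jl, m-1] at j
        have hsplit := pooled_split n Y hjl1 hjlj (by omega : j < m - 1)
        have hW1 : 0 < ∑ h ∈ Finset.Icc jl j, n h := pw_pos hn hjl1 hjlj (by omega)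
        have hW2 : 0 < ∑ h ∈ Finset.Icc (j+1) (m-1), n h :=
          pw_pos hn (by omega) (by omega) (by omega)
        have eA : pooledMean n Y jl j = Y j :=
          mean_const hW1 (fun h h1 h2 => hjlconst h h1 h2)
        have eB : pooledMean n Y (j+1) (m-1) = Y (j+1) :=
          mean_const hW2 (fun h h1 h2 => hjuconst h h1 (by omega))
        have hAdef : pooledMean n Y jl j
            = (∑ h ∈ Finset.Icc jl j, n h * Y h) / (∑ h ∈ Finset.Icc jl j, n h) := rfl
        have hBdef : pooledMean n Y (j+1) (m-1)
            = (∑ h ∈ Finset.Icc (j+1) (m-1), n h * Y h)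
              / (∑ h ∈ Finset.Icc (j+1) (m-1), n h) := rfl
        have hlt : pooledMean n Y (j+1) (m-1) < pooledMean n Y jl j := by
          rw [eA, eB]; exact hviol
        rw [hAdef, hBdef] at hlt
        have := div_lt_combo hW1 hW2 hlt
        rw [← hsplit, ← hBdef] at this
        rw [← eB]
        exact this
  -- Step 3 : Ȳ_{m,t} < Ȳ_{jl,t}, contradicting maximality at jl
  have hsplit := pooled_split n Y hjl1 (by omega : jl ≤ m - 1) (by omega : m - 1 < t)
  have hmm : m - 1 + 1 = m := by omega
  rw [hmm] at hsplit
  have hW1 : 0 < ∑ h ∈ Finset.Icc jl (m-1), n h := pw_pos hn hjl1 (by omega) (by omega)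
  have hW2 : 0 < ∑ h ∈ Finset.Icc m t, n h := pw_pos hn hm1' (by omega) htk
  have hAdef : pooledMean n Y jl (m-1)
      = (∑ h ∈ Finset.Icc jl (m-1), n h * Y h) / (∑ h ∈ Finset.Icc jl (m-1), n h) := rfl
  have hBdef : pooledMean n Y m t
      = (∑ h ∈ Finset.Icc m t, n h * Y h) / (∑ h ∈ Finset.Icc m t, n h) := rfl
  have hlt : pooledMean n Y m t < pooledMean n Y jl (m-1) := lt_of_le_of_lt step1 step2
  rw [hAdef, hBdef] at hlt
  have hfin := div_lt_combo hW1 hW2 hlt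
  rw [← hsplit, ← hBdef] at hfin
  have := hmax jl hjl1 (by omega)
  linarith

end Main

section Seq

variable (n Y : ℕ → ℝ) (k : ℕ)

lemma sdIdx_le_kadd : ∀ u, sdIdx n Y k u ≤ k + 1 - u := by
  intro u
  induction u with
  | zero => simp [sdIdx]
  | succ u ih =>
      have h1 : sdIdx n Y k (u+1) ≤ sdIdx n Y k u - 1 := by
        show firstIdx n Y (sdIdx n Y k u - 1) ≤ _
        exact firstIdx_le n Y _
      omega

lemma sdIdx_two_le : ∀ u, 1 ≤ k → (∀ v, v ≤ u → sdIdx n Y k v ≠ 1) → 2 ≤ sdIdx n Y k u := by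
  intro u hk
  induction u with
  | zero => intro _; show 2 ≤ k + 1; omega
  | succ u ih =>
      intro hne
      have h2 : 2 ≤ sdIdx n Y k u := ih (fun v hv => hne v (by omega))
      have hb := sdIdx_le_kadd n Y k u
      have ht1 : 1 ≤ sdIdx n Y k u - 1 := by omega
      have hs := firstIdx_spec n Y ht1
      have : sdIdx n Y k (u+1) = firstIdx n Y (sdIdx n Y k u - 1) := rfl
      have hne1 := hne (u+1) (le_refl _)
      omega

lemma sdSteps_mem (hk : 1 ≤ k) : sdIdx n Y k (sdSteps n Y k) = 1 := by
  have hne : ({u | sdIdx n Y k u = 1} : Set ℕ).Nonempty := by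
    by_contra hemp
    push_neg at hemp
    have h2 := sdIdx_two_le n Y k k hk
      (fun v _ h => Set.eq_empty_iff_forall_notMem.mp hemp v h)
    have hb := sdIdx_le_kadd n Y k k
    omega
  exact Nat.sInf_mem hne

end Seq


/-- a violator stretch `[j_l, j_u]` (as in one PAVA pooling step) is contained
in a single block `[i_u, i_{u-1} - 1]` of the SDMMSA partition. -/
theorem violator_stretch_in_one_block (k : ℕ) (hk : 1 ≤ k) (n Y : ℕ → ℝ)
    (hn : ∀ h, 1 ≤ h → h ≤ k → 0 < n h)
    (j : ℕ) (hj1 : 1 ≤ j) (hjk : j + 1 ≤ k) (hviol : Y (j + 1) < Y j)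
    (jl ju : ℕ)
    (hjl1 : 1 ≤ jl) (hjlj : jl ≤ j)
    (hjlconst : ∀ i, jl ≤ i → i ≤ j → Y i = Y j)
    (hjlmin : ∀ i', 1 ≤ i' → i' ≤ j → (∀ i, i' ≤ i → i ≤ j → Y i = Y j) → jl ≤ i')
    (hju1 : j + 1 ≤ ju) (hjuk : ju ≤ k)
    (hjuconst : ∀ i, j + 1 ≤ i → i ≤ ju → Y i = Y (j + 1))
    (hjumax : ∀ u', u' ≤ k → (∀ i, j + 1 ≤ i → i ≤ u' → Y i = Y (j + 1)) → u' ≤ ju) :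
    ∃ u, 1 ≤ u ∧ u ≤ sdSteps n Y k ∧
      sdIdx n Y k u ≤ jl ∧ ju ≤ sdIdx n Y k (u - 1) - 1 := by
  set T : Set ℕ := {u | sdIdx n Y k u ≤ jl} with hT
  have hstep : sdIdx n Y k (sdSteps n Y k) = 1 := sdSteps_mem n Y k hk
  have hTne : T.Nonempty := ⟨sdSteps n Y k, by simp [hT, hstep]; omega⟩
  set u := sInf T with hu
  have humem : sdIdx n Y k u ≤ jl := Nat.sInf_mem hTne
  have hule : u ≤ sdSteps n Y k := Nat.sInf_le (by simp [hT, hstep]; omega)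
  have hu1 : 1 ≤ u := by
    rcases Nat.eq_zero_or_pos u with h0 | h; swap
    · exact h
    · exfalso
      rw [h0] at humem
      have : sdIdx n Y k 0 = k + 1 := rfl
      omega
  -- all indices before u stay above ju
  have key : ∀ v, v < u → ju + 1 ≤ sdIdx n Y k v := by
    intro v
    induction v with
    | zero =>
        intro _
        show ju + 1 ≤ k + 1
        omega
    | succ v ih =>
        intro hv
        have h1 := ih (by omega)
        have hb := sdIdx_le_kadd n Y k v
        have ht1 : ju ≤ sdIdx n Y k v - 1 := by omega
        have ht2 : sdIdx n Y k v - 1 ≤ k := by omega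
        have hgt : jl < sdIdx n Y k (v+1) := by
          have hnm : (v+1) ∉ T := Nat.notMem_of_lt_sInf hv
          simp only [hT, Set.mem_setOf_eq, not_le] at hnm
          exact hnm
        by_contra hle
        push_neg at hle
        have hm2 : sdIdx n Y k (v+1) ≤ ju := by omega
        have hdef : sdIdx n Y k (v+1) = firstIdx n Y (sdIdx n Y k v - 1) := rfl
        have hs := firstIdx_spec n Y (show 1 ≤ sdIdx n Y k v - 1 by omega)
        refine not_max_in_stretch hn hj1 hviol hjl1 hjlj hjlconst hju1 hjuk hjuconst
          ht1 ht2 hgt hm2 ?_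
        rw [hdef]
        exact hs.2.2
  refine ⟨u, hu1, hule, humem, ?_⟩
  have := key (u - 1) (by omega)
  omega
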